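/- arXiv:1204.4611 — 2 statements merged into one kernel-verified Lean document; each statement's English description precedes it below -/
import Mathlib

section
/- Let $\{Q_1,\dots,Q_d,Q\}$ be a financial experiment on $(\Omega,\mathcal{F})$ with trading times $I=\{0,T\}$ only and $\mathcal{F}_0$ trivial. Then the martingale measure $Q$ is the unique equivalent martingale measure if and only if the class $\mathcal{G}$ of strictly positive functions in $\bigcap_{i=1}^d L_1(Q_i)\cap L_1(Q)$ is complete with respect to $\{Q_1,\dots,Q_d,Q\}$, i.e. every $g\in\mathcal{G}$ with $E_{Q_i}(g)=E_Q(g)$ for all $i$ is $Q$-almost surely constant. -/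
open MeasureTheory
open scoped ENNReal NNReal

private lemma integral_wd_ofReal {Ω : Type*} {m : MeasurableSpace Ω} {μ : Measure Ω}
    {h : Ω → ℝ} (hm : Measurable h) (hnn : 0 ≤ᵐ[μ] h) (φ : Ω → ℝ) :
    ∫ ω, φ ω ∂(μ.withDensity fun ω => ENNReal.ofReal (h ω)) = ∫ ω, h ω * φ ω ∂μ := by
  have heq : (fun ω => ENNReal.ofReal (h ω)) = fun ω => ((h ω).toNNReal : ℝ≥0∞) := rfl
  rw [heq, integral_withDensity_eq_integral_smul hm.real_toNNReal]
  refine integral_congr_ae (hnn.mono fun ω hω => ?_)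
  simp [NNReal.smul_def, Real.coe_toNNReal _ hω]

private lemma integrable_wd_ofReal {Ω : Type*} {m : MeasurableSpace Ω} {μ : Measure Ω}
    {h : Ω → ℝ} (hm : Measurable h) (hnn : 0 ≤ᵐ[μ] h) {φ : Ω → ℝ} :
    Integrable φ (μ.withDensity fun ω => ENNReal.ofReal (h ω)) ↔
      Integrable (fun ω => h ω * φ ω) μ := by
  rw [integrable_withDensity_iff hm.ennreal_ofReal
    (Filter.Eventually.of_forall fun ω => ENNReal.ofReal_lt_top)]
  exact integrable_congr (hnn.mono fun ω hω => by
    simp [ENNReal.toReal_ofReal hω, mul_comm])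

/-- Two-time model (`I = {0,T}`, trivial `𝓕₀`): the martingale measure `Q`
(with `∫ X_Tⁱ dQ = x₀ⁱ`) is the unique equivalent martingale measure iff the
class of strictly positive functions in `⋂ᵢ L₁(Qᵢ) ∩ L₁(Q)` is complete with
respect to `{Q₁,…,Q_d,Q}`, where `dQᵢ/dQ = X_Tⁱ/x₀ⁱ`. -/
theorem stmt_13 {Ω : Type*} {m : MeasurableSpace Ω}
    (Q : Measure Ω) [IsProbabilityMeasure Q]
    (d : ℕ) (X : Fin d → Ω → ℝ)
    (hXmeas : ∀ i, Measurable (X i))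
    (hXpos : ∀ i, ∀ ω, 0 < X i ω)
    (hXint : ∀ i, Integrable (X i) Q)
    (x₀ : Fin d → ℝ) (hx₀ : ∀ i, 0 < x₀ i)
    (hQmartM : ∀ i, ∫ ω, X i ω ∂Q = x₀ i)
    (Qi : Fin d → Measure Ω)
    (hQi : ∀ i, Qi i = Q.withDensity (fun ω => ENNReal.ofReal (X i ω / x₀ i)))
    (𝓟 : Set (Measure Ω))
    (h𝓟 : 𝓟 = {Q' : Measure Ω | IsProbabilityMeasure Q' ∧ Q' ≪ Q ∧ Q ≪ Q' ∧
      ∀ i, ∫ ω, X i ω ∂Q' = x₀ i}) :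
    𝓟 = {Q} ↔
      ∀ g : Ω → ℝ, Measurable g → (∀ᵐ ω ∂Q, 0 < g ω) →
        (∀ i, Integrable g (Qi i)) → Integrable g Q →
        (∀ i, ∫ ω, g ω ∂(Qi i) = ∫ ω, g ω ∂Q) →
        ∃ c : ℝ, g =ᵐ[Q] fun _ => c := by
  have hXinn : ∀ i, 0 ≤ᵐ[Q] fun ω => X i ω / x₀ i := fun i =>
    Filter.Eventually.of_forall fun ω => (div_pos (hXpos i ω) (hx₀ i)).le
  constructor
  · -- uniqueness → completeness
    intro hP g hgmeas hgpos hgint hgintQ hgeq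
    have hgnn : 0 ≤ᵐ[Q] g := hgpos.mono fun ω h => h.le
    set c : ℝ := ∫ ω, g ω ∂Q with hc
    have hcpos : 0 < c := by
      rw [hc, integral_pos_iff_support_of_nonneg_ae hgnn hgintQ]
      have hcomp0 : Q (Function.support g)ᶜ = 0 := by
        have hae : ∀ᵐ ω ∂Q, ω ∈ Function.support g :=
          hgpos.mono fun ω h => ne_of_gt h
        exact ae_iff.mp hae
      have hle : (1 : ℝ≥0∞) ≤ Q (Function.support g) := by
        have h1 := measure_union_le (μ := Q) (Function.support g) (Function.support g)ᶜ
        rw [Set.union_compl_self, measure_univ, hcomp0, add_zero] at h1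
        exact h1
      exact lt_of_lt_of_le zero_lt_one hle
    have hgcnn : 0 ≤ᵐ[Q] fun ω => g ω / c :=
      hgnn.mono fun ω h => div_nonneg h hcpos.le
    set D : Ω → ℝ≥0∞ := fun ω => ENNReal.ofReal (g ω / c) with hD
    have hDm : Measurable D := (hgmeas.div_const c).ennreal_ofReal
    have hint1 : ∫ ω, g ω / c ∂Q = 1 := by
      rw [integral_div, ← hc, div_self hcpos.ne']
    have hlint : ∫⁻ ω, D ω ∂Q = 1 := by
      rw [hD, ← ofReal_integral_eq_lintegral_ofReal (hgintQ.div_const c) hgcnn,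
        hint1, ENNReal.ofReal_one]
    have hνprob : IsProbabilityMeasure (Q.withDensity D) :=
      ⟨by rw [withDensity_apply _ MeasurableSet.univ, setLIntegral_univ, hlint]⟩
    have hν_mem : Q.withDensity D ∈ 𝓟 := by
      rw [h𝓟]
      refine ⟨hνprob, withDensity_absolutelyContinuous _ _,
        withDensity_absolutelyContinuous' hDm.aemeasurable
          (hgpos.mono fun ω h => (ENNReal.ofReal_pos.mpr (div_pos h hcpos)).ne'),
        fun i => ?_⟩
      have hQiInt : ∫ ω, (X i ω / x₀ i) * g ω ∂Q = c := by
        rw [← integral_wd_ofReal ((hXmeas i).div_const _) (hXinn i) g, ← hQi i,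
          hgeq i, hc]
      rw [hD, integral_wd_ofReal (hgmeas.div_const c) hgcnn (X i)]
      have hrw : ∀ ω, g ω / c * X i ω = (x₀ i / c) * ((X i ω / x₀ i) * g ω) := by
        intro ω
        field_simp [(hx₀ i).ne', hcpos.ne']
      calc ∫ ω, g ω / c * X i ω ∂Q
          = ∫ ω, (x₀ i / c) * ((X i ω / x₀ i) * g ω) ∂Q := by simp_rw [hrw]
        _ = (x₀ i / c) * c := by rw [integral_const_mul, hQiInt]
        _ = x₀ i := by field_simp
    rw [hP, Set.mem_singleton_iff] at hν_mem
    have hDone : D =ᵐ[Q] fun _ => (1 : ℝ≥0∞) := by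
      rw [← withDensity_eq_iff hDm.aemeasurable aemeasurable_const
        (by rw [hlint]; exact ENNReal.one_ne_top)]
      rw [hν_mem]
      exact (withDensity_one (μ := Q)).symm
    refine ⟨c, ?_⟩
    filter_upwards [hDone, hgpos] with ω h1 h2
    have h3 : g ω / c = 1 := ENNReal.ofReal_eq_one.mp h1
    exact (div_eq_one_iff_eq hcpos.ne').mp h3
  · -- completeness → uniqueness
    intro hcomp
    rw [h𝓟]
    refine Set.eq_singleton_iff_unique_mem.mpr
      ⟨⟨inferInstance, Measure.AbsolutelyContinuous.rfl,
        Measure.AbsolutelyContinuous.rfl, hQmartM⟩, ?_⟩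
    rintro Q' ⟨hQ'prob, hQ'Q, hQQ', hQ'mart⟩
    haveI := hQ'prob
    set g : Ω → ℝ := fun ω => (Q'.rnDeriv Q ω).toReal with hg
    have hXQ' : ∀ i, Integrable (X i) Q' := by
      intro i
      by_contra h
      have h0 := hQ'mart i
      rw [integral_undef h] at h0
      exact (hx₀ i).ne' h0.symm
    have hgm : Measurable g := (Measure.measurable_rnDeriv Q' Q).ennreal_toReal
    have hlt : ∀ᵐ ω ∂Q, Q'.rnDeriv Q ω < ⊤ := Measure.rnDeriv_lt_top Q' Q
    have hpos' : ∀ᵐ ω ∂Q, 0 < Q'.rnDeriv Q ω := Measure.rnDeriv_pos' hQQ'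
    have hgpos : ∀ᵐ ω ∂Q, 0 < g ω := by
      filter_upwards [hpos', hlt] with ω h1 h2
      exact ENNReal.toReal_pos h1.ne' h2.ne
    have hgintQ : Integrable g Q := Measure.integrable_toReal_rnDeriv
    have hgQ1 : ∫ ω, g ω ∂Q = 1 := by
      rw [hg, Measure.integral_toReal_rnDeriv hQ'Q]
      simp
    have hsmul : ∀ i, ∫ ω, g ω * X i ω ∂Q = x₀ i := by
      intro i
      have h1 := integral_rnDeriv_smul hQ'Q (f := X i)
      simpa [smul_eq_mul, hQ'mart i] using h1
    have hgQi : ∀ i, Integrable g (Qi i) := by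
      intro i
      rw [hQi i, integrable_wd_ofReal ((hXmeas i).div_const _) (hXinn i)]
      have h1 : Integrable (fun ω => (Q'.rnDeriv Q ω).toReal • X i ω) Q :=
        (integrable_rnDeriv_smul_iff hQ'Q).mpr (hXQ' i)
      refine (h1.div_const (x₀ i)).congr
        (Filter.Eventually.of_forall fun ω => ?_)
      simp only [smul_eq_mul, hg]
      field_simp
    have hinteq : ∀ i, ∫ ω, g ω ∂(Qi i) = ∫ ω, g ω ∂Q := by
      intro i
      rw [hQi i, integral_wd_ofReal ((hXmeas i).div_const _) (hXinn i) g, hgQ1]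
      have hrw : ∀ ω, (X i ω / x₀ i) * g ω = (g ω * X i ω) / x₀ i := fun ω => by
        ring
      simp_rw [hrw, integral_div, hsmul i, div_self (hx₀ i).ne']
    obtain ⟨k, hk⟩ := hcomp g hgm hgpos hgQi hgintQ hinteq
    have hk1 : k = 1 := by
      have h2 := hgQ1
      rw [integral_congr_ae hk, integral_const, probReal_univ,
        smul_eq_mul, one_mul] at h2
      exact h2
    have hD1 : Q'.rnDeriv Q =ᵐ[Q] fun _ => (1 : ℝ≥0∞) := by
      filter_upwards [hk, hlt] with ω h1 h2
      have h3 : (Q'.rnDeriv Q ω).toReal = 1 := by rw [hk1] at h1; exact h1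
      rw [← ENNReal.ofReal_toReal h2.ne, h3, ENNReal.ofReal_one]
    calc Q' = Q.withDensity (Q'.rnDeriv Q) :=
          (Measure.withDensity_rnDeriv_eq Q' Q hQ'Q).symm
      _ = Q.withDensity (fun _ => 1) := withDensity_congr_ae hD1
      _ = Q := by
          rw [show (fun _ : Ω => (1 : ℝ≥0∞)) = 1 from rfl, withDensity_one]
end

section
/- Let $Q\in\mathcal{P}$ be a martingale measure for the positive price processes $(X^i_t)_{t\in I}$ and suppose that every strictly positive $g\in \bigcap_i L_1(Q_i)\cap L_1(Q)$ satisfying $E_Q[g\,X_T^i\mid \mathcal{F}_t] = X_t^i E_Q[g\mid\mathcal{F}_t]$ for all $i\le d$ and $t\in I$ is $Q$-a.s. constant. Then $Q$ is the unique equivalent martingale measure: $\mathcal{P}=\{Q\}$. -/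
open MeasureTheory
open scoped ENNReal NNReal

/-- Conditional completeness implies uniqueness of the equivalent martingale
measure: if every strictly positive `g ∈ ⋂ᵢ L₁(Qᵢ) ∩ L₁(Q)` satisfying
`E_Q[g X_Tⁱ | 𝓕 t] = X_tⁱ E_Q[g | 𝓕 t]` for all `i ≤ d`, `t ∈ I` is `Q`-a.s.
constant, then `𝓟 = {Q}`. -/
theorem stmt_14 {Ω : Type*} {m : MeasurableSpace Ω}
    (Q : Measure Ω) [IsProbabilityMeasure Q]
    (I : Set ℝ) (h0I : (0 : ℝ) ∈ I) (T : ℝ) (hT : T ∈ I) (hTtop : ∀ t ∈ I, t ≤ T)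
    (𝓕 : Filtration I m)
    (d : ℕ) (X : Fin d → I → Ω → ℝ)
    (hadapted : ∀ i, Adapted 𝓕 (X i))
    (hpos : ∀ i (t : I), ∀ ω, 0 < X i t ω)
    (hintQ : ∀ i (t : I), Integrable (X i t) Q)
    (hQmart : ∀ i, Martingale (X i) 𝓕 Q)
    (x₀ : Fin d → ℝ) (hx₀ : ∀ i, 0 < x₀ i)
    (hX0 : ∀ i, X i ⟨0, h0I⟩ = fun _ => x₀ i)
    (Qi : Fin d → Measure Ω)
    (hQi : ∀ i, Qi i
      = Q.withDensity (fun ω => ENNReal.ofReal (X i ⟨T, hT⟩ ω / x₀ i)))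
    (𝓟 : Set (Measure Ω))
    (h𝓟 : 𝓟 = {Q' : Measure Ω | IsProbabilityMeasure Q' ∧ Q' ≪ Q ∧ Q ≪ Q' ∧
      ∀ i, Martingale (X i) 𝓕 Q'})
    (hcomplete : ∀ g : Ω → ℝ, Measurable g → (∀ᵐ ω ∂Q, 0 < g ω) →
      (∀ i, Integrable g (Qi i)) → Integrable g Q →
      (∀ i (t : I),
        (Q[fun ω => g ω * X i ⟨T, hT⟩ ω | 𝓕 t])
          =ᵐ[Q] fun ω => X i t ω * (Q[g | 𝓕 t]) ω) →
      ∃ c : ℝ, g =ᵐ[Q] fun _ => c) :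
    𝓟 = {Q} := by
  have huniq : ∀ Q' : Measure Ω, IsProbabilityMeasure Q' → Q' ≪ Q → Q ≪ Q' →
      (∀ i, Martingale (X i) 𝓕 Q') → Q' = Q := by
    intro Q' hQ'prob hQ'Q hQQ' hQ'mart
    haveI := hQ'prob
    set g : Ω → ℝ := fun ω => (Q'.rnDeriv Q ω).toReal with hgdef
    have hgmeas : Measurable g := (Measure.measurable_rnDeriv Q' Q).ennreal_toReal
    have hglt : ∀ᵐ ω ∂Q, Q'.rnDeriv Q ω < ∞ := Measure.rnDeriv_lt_top Q' Q
    have hgpos : ∀ᵐ ω ∂Q, 0 < g ω := by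
      filter_upwards [Measure.rnDeriv_pos' hQQ', hglt] with ω h1 h2
      exact ENNReal.toReal_pos h1.ne' h2.ne
    have hgint : Integrable g Q := Measure.integrable_toReal_rnDeriv
    -- transfer of integrability from Q' to Q
    have htrans : ∀ f : Ω → ℝ, Integrable f Q' →
        Integrable (fun ω => g ω * f ω) Q := by
      intro f hf
      have := (integrable_rnDeriv_smul_iff (f := f) hQ'Q).mpr hf
      simpa [smul_eq_mul, hgdef] using this
    -- transfer of set integrals
    have hset : ∀ (f : Ω → ℝ) (s : Set Ω), MeasurableSet s →
        ∫ x in s, g x * f x ∂Q = ∫ x in s, f x ∂Q' := by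
      intro f s hs
      have := setIntegral_rnDeriv_smul (f := f) hQ'Q hs
      simpa [smul_eq_mul, hgdef] using this
    -- integrability of g w.r.t. each Qi
    have hgQi : ∀ i, Integrable g (Qi i) := by
      intro i
      rw [hQi i]
      have hXTm : AEMeasurable (fun ω => (X i ⟨T, hT⟩ ω / x₀ i).toNNReal) Q :=
        (measurable_real_toNNReal.comp
          (((hadapted i ⟨T, hT⟩).mono (𝓕.le _) le_rfl).div_const _)).aemeasurable
      have hd : (fun ω => ENNReal.ofReal (X i ⟨T, hT⟩ ω / x₀ i))
          = fun ω => ((fun ω => (X i ⟨T, hT⟩ ω / x₀ i).toNNReal) ω : ℝ≥0∞) := rfl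
      rw [hd, integrable_withDensity_iff_integrable_smul₀ hXTm]
      have hint : Integrable (fun ω => g ω * X i ⟨T, hT⟩ ω) Q :=
        htrans _ ((hQ'mart i).integrable _)
      have : Integrable (fun ω => (X i ⟨T, hT⟩ ω / x₀ i) * g ω) Q := by
        have := (hint.const_mul (x₀ i)⁻¹)
        refine this.congr (Filter.Eventually.of_forall fun ω => ?_)
        ring
      refine this.congr (Filter.Eventually.of_forall fun ω => ?_)
      simp only [NNReal.smul_def, smul_eq_mul]
      rw [Real.coe_toNNReal _ (le_of_lt (div_pos (hpos i _ ω) (hx₀ i)))]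
    -- the conditional expectation identity
    have hkey : ∀ i (t : I),
        (Q[fun ω => g ω * X i ⟨T, hT⟩ ω | 𝓕 t])
          =ᵐ[Q] fun ω => X i t ω * (Q[g | 𝓕 t]) ω := by
      intro i t
      have hTt : t ≤ (⟨T, hT⟩ : I) := hTtop t t.2
      have hgXT : Integrable (fun ω => g ω * X i ⟨T, hT⟩ ω) Q :=
        htrans _ ((hQ'mart i).integrable _)
      have hgXt : Integrable (fun ω => g ω * X i t ω) Q :=
        htrans _ ((hQ'mart i).integrable _)
      have hXtg : Integrable ((X i t) * g) Q := by
        refine hgXt.congr (Filter.Eventually.of_forall fun ω => ?_)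
        simp [mul_comm]
      have hpull : Q[(X i t) * g | 𝓕 t] =ᵐ[Q] (X i t) * Q[g | 𝓕 t] :=
        condExp_mul_of_stronglyMeasurable_left (hadapted i t).stronglyMeasurable hXtg hgint
      -- the candidate Q[(X i t) * g | 𝓕 t] is a version of Q[g * X_T | 𝓕 t]
      have hcand : (Q[(X i t) * g | 𝓕 t])
          =ᵐ[Q] Q[fun ω => g ω * X i ⟨T, hT⟩ ω | 𝓕 t] := by
        refine ae_eq_condExp_of_forall_setIntegral_eq (𝓕.le t) hgXT
          (fun s _ _ => integrable_condExp.integrableOn)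
          (fun s hs hμs => ?_)
          stronglyMeasurable_condExp.aestronglyMeasurable
        rw [setIntegral_condExp (𝓕.le t) hXtg hs]
        have hs' : MeasurableSet s := 𝓕.le t s hs
        calc ∫ x in s, ((X i t) * g) x ∂Q
            = ∫ x in s, g x * X i t x ∂Q := by
              refine setIntegral_congr_fun hs' fun ω _ => ?_; simp [mul_comm]
          _ = ∫ x in s, X i t x ∂Q' := hset _ s hs'
          _ = ∫ x in s, X i ⟨T, hT⟩ x ∂Q' := (hQ'mart i).setIntegral_eq hTt hs
          _ = ∫ x in s, g x * X i ⟨T, hT⟩ x ∂Q := (hset _ s hs').symm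
      exact hcand.symm.trans hpull
    obtain ⟨c, hc⟩ := hcomplete g hgmeas hgpos hgQi hgint hkey
    have hintc : ∫ ω, g ω ∂Q = c := by
      rw [integral_congr_ae hc, integral_const]
      simp
    have hint1 : ∫ ω, g ω ∂Q = 1 := by
      rw [hgdef, Measure.integral_toReal_rnDeriv hQ'Q]
      simp
    have hc1 : c = 1 := by rw [← hintc, hint1]
    have hrn1 : Q'.rnDeriv Q =ᵐ[Q] fun _ => (1 : ℝ≥0∞) := by
      filter_upwards [hc, hglt] with ω h1 h2
      have hg1 : g ω = 1 := h1.trans hc1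
      exact (ENNReal.toReal_eq_one_iff _).mp hg1
    calc Q' = Q.withDensity (Q'.rnDeriv Q) :=
          (Measure.withDensity_rnDeriv_eq Q' Q hQ'Q).symm
      _ = Q.withDensity (fun _ => (1 : ℝ≥0∞)) := withDensity_congr_ae hrn1
      _ = Q := by simp [withDensity_one]
  rw [h𝓟]
  ext Q'
  simp only [Set.mem_setOf_eq, Set.mem_singleton_iff]
  constructor
  · rintro ⟨h1, h2, h3, h4⟩
    exact huniq Q' h1 h2 h3 h4
  · rintro rfl
    exact ⟨inferInstance, Measure.AbsolutelyContinuous.rfl,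
      Measure.AbsolutelyContinuous.rfl, hQmart⟩
end
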